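/- Let n, q be positive integers with q ≤ n and let B be a real n×q matrix of full column rank q. Then the kernel of the linear map K ↦ B·Kᵀ + K·Bᵀ from real n×q matrices to real n×n matrices equals {B·S : S a real q×q skew-symmetric matrix}, and this kernel has dimension q(q−1)/2 over ℝ. -/

import Mathlib

open Matrix

/-- The submodule of skew-symmetric `q × q` real matrices. -/
def skewSub (q : ℕ) : Submodule ℝ (Matrix (Fin q) (Fin q) ℝ) where
  carrier := {S | Sᵀ = -S}
  add_mem' := by
    intro a b ha hb
    simp only [Set.mem_setOf_eq] at *
    rw [Matrix.transpose_add, ha, hb, neg_add]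
  zero_mem' := by simp
  smul_mem' := by
    intro c a ha
    simp only [Set.mem_setOf_eq] at *
    rw [Matrix.transpose_smul, ha, smul_neg]

/-- Skew-symmetric matrices are linearly equivalent to functions on strictly
ordered pairs. -/
noncomputable def skewEquiv (q : ℕ) :
    skewSub q ≃ₗ[ℝ] ((Σ j : Fin q, Fin j.val) → ℝ) where
  toFun S := fun p => S.1 ⟨p.2.val, p.2.isLt.trans p.1.isLt⟩ p.1
  map_add' S T := rfl
  map_smul' c S := rfl
  invFun f := by
    refine ⟨fun i j =>
      if h : (i : ℕ) < (j : ℕ) then f ⟨j, ⟨i, h⟩⟩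
      else if h' : (j : ℕ) < (i : ℕ) then -f ⟨i, ⟨j, h'⟩⟩ else 0, ?_⟩
    show _ᵀ = -_
    refine Matrix.ext fun i j => ?_
    show (if h : (j : ℕ) < (i : ℕ) then f ⟨i, ⟨j, h⟩⟩
        else if h' : (i : ℕ) < (j : ℕ) then -f ⟨j, ⟨i, h'⟩⟩ else 0) =
      -(if h : (i : ℕ) < (j : ℕ) then f ⟨j, ⟨i, h⟩⟩
        else if h' : (j : ℕ) < (i : ℕ) then -f ⟨i, ⟨j, h'⟩⟩ else 0)
    rcases lt_trichotomy (i : ℕ) (j : ℕ) with h | h | h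
    · rw [dif_neg (by omega), dif_pos h, dif_pos h]
    · rw [dif_neg (by omega), dif_neg (by omega), dif_neg (by omega),
        dif_neg (by omega), neg_zero]
    · rw [dif_pos h, dif_neg (by omega), dif_pos h, neg_neg]
  left_inv S := by
    apply Subtype.ext
    refine Matrix.ext fun i j => ?_
    dsimp only
    have hS := S.2
    replace hS : (S.1)ᵀ = -S.1 := hS
    rcases lt_trichotomy (i : ℕ) (j : ℕ) with h | h | h
    · rw [dif_pos h]
    · have hij : i = j := Fin.ext h
      subst hij
      rw [dif_neg (by omega), dif_neg (by omega)]
      have := congrFun (congrFun hS i) i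
      simp only [Matrix.transpose_apply, Matrix.neg_apply] at this
      linarith
    · rw [dif_neg (by omega), dif_pos h]
      have := congrFun (congrFun hS j) i
      simp only [Matrix.transpose_apply, Matrix.neg_apply] at this
      simp only [this, neg_neg]
  right_inv f := by
    funext p
    rcases p with ⟨j, i⟩
    simp only []
    rw [dif_pos i.isLt]

lemma skewSub_finrank (q : ℕ) :
    Module.finrank ℝ (skewSub q) = q * (q - 1) / 2 := by
  rw [(skewEquiv q).finrank_eq, Module.finrank_pi, Fintype.card_sigma]
  simp only [Fintype.card_fin]
  have h : ∑ x : Fin q, (x : ℕ) = ∑ i ∈ Finset.range q, i :=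
    Fin.sum_univ_eq_sum_range (fun i => i) q
  rw [h, Finset.sum_range_id]

/-- For `B` of full column rank, the kernel of `K ↦ B·Kᵀ + K·Bᵀ`
equals `{B·S : S skew-symmetric}` and has dimension `q(q-1)/2`. -/
theorem stmt_3 (n q : ℕ) (hn : 0 < n) (hq : 0 < q) (hqn : q ≤ n)
    (B : Matrix (Fin n) (Fin q) ℝ) (hB : B.rank = q)
    (Φ : Matrix (Fin n) (Fin q) ℝ →ₗ[ℝ] Matrix (Fin n) (Fin n) ℝ)
    (hΦ : ∀ K, Φ K = B * Kᵀ + K * Bᵀ) :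
    ((LinearMap.ker Φ : Set (Matrix (Fin n) (Fin q) ℝ)) =
      {M | ∃ S : Matrix (Fin q) (Fin q) ℝ, Sᵀ = -S ∧ M = B * S}) ∧
    Module.finrank ℝ (LinearMap.ker Φ) = q * (q - 1) / 2 := by
  classical
  set G := Bᵀ * B with hGdef
  -- the kernel of B as a linear map is trivial
  have hkerB : LinearMap.ker B.mulVecLin = ⊥ := by
    have h1 := B.mulVecLin.finrank_range_add_finrank_ker
    rw [Module.finrank_fin_fun] at h1
    have h2 : Module.finrank ℝ (LinearMap.range B.mulVecLin) = q := hB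
    have h3 : Module.finrank ℝ (LinearMap.ker B.mulVecLin) = 0 := by omega
    exact Submodule.finrank_eq_zero.mp h3
  have hkerG : LinearMap.ker G.mulVecLin = ⊥ := by
    rw [hGdef, Matrix.ker_mulVecLin_transpose_mul_self, hkerB]
  have hGu : IsUnit G := by
    rw [← Matrix.mulVec_injective_iff_isUnit]
    intro x y hxy
    have : G.mulVecLin x = G.mulVecLin y := hxy
    have := LinearMap.ker_eq_bot.mp hkerG this
    exact this
  have hGdet : IsUnit G.det := (Matrix.isUnit_iff_isUnit_det G).mp hGu
  have hGinvG : G⁻¹ * G = 1 := Matrix.nonsing_inv_mul G hGdet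
  have hGGinv : G * G⁻¹ = 1 := Matrix.mul_nonsing_inv G hGdet
  have hGT : Gᵀ = G := by rw [hGdef, Matrix.transpose_mul, Matrix.transpose_transpose]
  have hGinvT : (G⁻¹)ᵀ = G⁻¹ := by rw [Matrix.transpose_nonsing_inv, hGT]
  -- key characterization of the kernel
  have key : ∀ K : Matrix (Fin n) (Fin q) ℝ,
      Φ K = 0 ↔ ∃ S : Matrix (Fin q) (Fin q) ℝ, Sᵀ = -S ∧ K = B * S := by
    intro K
    constructor
    · intro h0
      rw [hΦ] at h0
      refine ⟨-(Kᵀ * B * G⁻¹), ?_, ?_⟩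
      · -- skewness
        have e1 : G * Kᵀ * B + Bᵀ * K * G = 0 := by
          have := congrArg (fun M => Bᵀ * M * B) h0
          simpa [Matrix.mul_add, Matrix.add_mul, Matrix.mul_assoc, hGdef] using this
        have e2 : Kᵀ * B * G⁻¹ + G⁻¹ * (Bᵀ * K) = 0 := by
          have h4 := congrArg (fun M => G⁻¹ * M * G⁻¹) e1
          simp only [Matrix.mul_add, Matrix.add_mul, Matrix.mul_zero, Matrix.zero_mul] at h4
          calc Kᵀ * B * G⁻¹ + G⁻¹ * (Bᵀ * K)
              = G⁻¹ * (G * Kᵀ * B) * G⁻¹ + G⁻¹ * (Bᵀ * K * G) * G⁻¹ := by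
                rw [show G⁻¹ * (G * Kᵀ * B) * G⁻¹ = (G⁻¹ * G) * (Kᵀ * B * G⁻¹) by
                    simp [Matrix.mul_assoc],
                  show G⁻¹ * (Bᵀ * K * G) * G⁻¹ = G⁻¹ * (Bᵀ * K) * (G * G⁻¹) by
                    simp [Matrix.mul_assoc],
                  hGinvG, hGGinv, Matrix.one_mul, Matrix.mul_one]
            _ = 0 := h4
        rw [Matrix.transpose_neg, Matrix.transpose_mul, Matrix.transpose_mul,
          Matrix.transpose_transpose, hGinvT, neg_neg]
        linear_combination (norm := module) -e2
      · -- K = B * S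
        have e3 : G * Kᵀ = -(Bᵀ * K * Bᵀ) := by
          have h8 := congrArg (fun M => Bᵀ * M) h0
          simp only [Matrix.mul_add, Matrix.mul_zero] at h8
          rw [← Matrix.mul_assoc, ← Matrix.mul_assoc] at h8
          rw [hGdef]
          linear_combination (norm := module) h8
        have e4 : Kᵀ = -(G⁻¹ * (Bᵀ * K * Bᵀ)) := by
          have h9 := congrArg (fun M => G⁻¹ * M) e3
          simp only [Matrix.mul_neg] at h9
          rw [← Matrix.mul_assoc, hGinvG, Matrix.one_mul] at h9
          exact h9
        have e5 : K = -(B * (Kᵀ * B) * G⁻¹) := by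
          have h10 := congrArg Matrix.transpose e4
          simpa [Matrix.transpose_neg, Matrix.transpose_mul, Matrix.transpose_transpose,
            hGinvT, Matrix.mul_assoc] using h10
        have h11 : B * (Kᵀ * B * G⁻¹) = B * (Kᵀ * B) * G⁻¹ := by
          simp [Matrix.mul_assoc]
        rw [Matrix.mul_neg, h11]
        exact e5
    · rintro ⟨S, hS, rfl⟩
      simp [hΦ, hS, Matrix.transpose_mul, Matrix.mul_assoc]
  constructor
  · ext K
    simp only [SetLike.mem_coe, LinearMap.mem_ker, Set.mem_setOf_eq]
    exact key K
  · -- dimension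
    let ψ : (skewSub q) →ₗ[ℝ] (LinearMap.ker Φ) :=
      { toFun := fun S => ⟨B * S.1, by
          rw [LinearMap.mem_ker]
          exact (key _).mpr ⟨S.1, S.2, rfl⟩⟩
        map_add' := fun S T => by
          apply Subtype.ext
          simp [Matrix.mul_add]
        map_smul' := fun c S => by
          apply Subtype.ext
          simp [Matrix.mul_smul] }
    have hbij : Function.Bijective ψ := by
      constructor
      · intro S T hST
        have h5 : B * S.1 = B * T.1 := congrArg Subtype.val hST
        have h6 : G * S.1 = G * T.1 := by
          rw [hGdef, Matrix.mul_assoc, Matrix.mul_assoc, h5]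
        apply Subtype.ext
        calc S.1 = G⁻¹ * (G * S.1) := by rw [← Matrix.mul_assoc, hGinvG, Matrix.one_mul]
          _ = G⁻¹ * (G * T.1) := by rw [h6]
          _ = T.1 := by rw [← Matrix.mul_assoc, hGinvG, Matrix.one_mul]
      · rintro ⟨K, hK⟩
        rw [LinearMap.mem_ker] at hK
        obtain ⟨S, hS, rfl⟩ := (key K).mp hK
        exact ⟨⟨S, hS⟩, rfl⟩
    rw [← (LinearEquiv.ofBijective ψ hbij).finrank_eq]
    exact skewSub_finrank q
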